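/- Let k be a field, n ≥ 4, and let V = ∧² k^n be the second exterior power of the standard representation of GL_n(k). Then V is not (n−1)-thick as a representation of GL_n(k): specifically, the subspace W = e₁ ∧ k^n of ∧² k^n satisfies W ∩ gW ≠ 0 for every g ∈ GL_n(k). -/

import Mathlib

open ExteriorAlgebra Module

section aux
variable {k : Type*} [Field k] {M : Type*} [AddCommGroup M] [Module k M]

noncomputable def wedgeCoord (φ ψ : M →ₗ[k] k) : ExteriorAlgebra k M →ₗ[k] k :=
  ExteriorAlgebra.liftAlternating
    (Function.update (0 : ∀ i : ℕ, M [⋀^Fin i]→ₗ[k] k) 2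
      ((Matrix.detRowAlternating).compLinearMap (LinearMap.pi ![φ, ψ])))

lemma ι_mul_ι_eq_ιMulti (x y : M) :
    ExteriorAlgebra.ι k x * ExteriorAlgebra.ι k y = ExteriorAlgebra.ιMulti k 2 ![x, y] := by
  simp [ExteriorAlgebra.ιMulti_apply, List.ofFn_succ]

lemma wedgeCoord_apply (φ ψ : M →ₗ[k] k) (x y : M) :
    wedgeCoord φ ψ (ExteriorAlgebra.ι k x * ExteriorAlgebra.ι k y)
      = φ x * ψ y - φ y * ψ x := by
  rw [ι_mul_ι_eq_ιMulti, wedgeCoord, ExteriorAlgebra.liftAlternating_apply_ιMulti,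
    Function.update_self, AlternatingMap.compLinearMap_apply]
  show Matrix.det (Matrix.of fun i => (LinearMap.pi ![φ, ψ]) (![x, y] i)) = _
  rw [Matrix.det_fin_two]
  simp [LinearMap.pi_apply, mul_comm]

end aux


lemma exists_superset_finrank {K V : Type*} [Field K] [AddCommGroup V] [Module K V]
    [FiniteDimensional K V] (W : Submodule K V) (d : ℕ) (h1 : finrank K W ≤ d)
    (h2 : d ≤ finrank K V) : ∃ U : Submodule K V, W ≤ U ∧ finrank K U = d := by
  induction d with
  | zero => exact ⟨W, le_rfl, by omega⟩
  | succ d ih =>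
    by_cases hW : finrank K W = d + 1
    · exact ⟨W, le_rfl, hW⟩
    · obtain ⟨U, hWU, hU⟩ := ih (by omega) (by omega)
      obtain ⟨m, hm⟩ := Submodule.exists_of_finrank_lt U (by omega)
      have hm0 : m ≠ 0 := by
        intro h
        exact hm 1 one_ne_zero (by simp [h])
      refine ⟨U ⊔ K ∙ m, le_trans hWU le_sup_left, ?_⟩
      have hinf : U ⊓ (K ∙ m) = ⊥ := by
        rw [eq_bot_iff]
        intro x hx
        rw [Submodule.mem_inf] at hx
        obtain ⟨r, rfl⟩ := Submodule.mem_span_singleton.mp hx.2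
        rcases eq_or_ne r 0 with rfl | hr
        · simp
        · exact absurd hx.1 (hm r hr)
      have hsum := Submodule.finrank_sup_add_finrank_inf_eq U (K ∙ m)
      rw [hinf, finrank_bot, finrank_span_singleton hm0] at hsum
      omega


set_option maxHeartbeats 1600000 in
/-- for `n ≥ 4`, the second exterior power of the standard
representation of `GL_n(k)` is not `(n-1)`-thick: the subspace `W = e₁ ∧ kⁿ`
satisfies `W ⊓ gW ≠ 0` for every `g`. -/
theorem wedge_two_standard_not_thick {k : Type*} [Field k] {n : ℕ} (hn : 4 ≤ n)
    (W : Submodule k (ExteriorAlgebra k (Fin n → k)))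
    (hWdef : W = Submodule.span k {x | ∃ v : Fin n → k,
        x = ExteriorAlgebra.ι k (Pi.single (⟨0, by omega⟩ : Fin n) (1 : k)) *
            ExteriorAlgebra.ι k v}) :
    (∀ g : (Fin n → k) ≃ₗ[k] (Fin n → k),
        W ⊓ W.map (ExteriorAlgebra.map
          (g : (Fin n → k) →ₗ[k] (Fin n → k))).toLinearMap ≠ ⊥) ∧
    ¬ (∀ V₁ V₂ : Submodule k (ExteriorAlgebra k (Fin n → k)),
        V₁ ≤ ⋀[k]^2 (Fin n → k) → V₂ ≤ ⋀[k]^2 (Fin n → k) →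
        Module.finrank k V₁ = n - 1 →
        Module.finrank k V₂ =
          Module.finrank k (⋀[k]^2 (Fin n → k) : Submodule k _) - (n - 1) →
        ∃ g : (Fin n → k) ≃ₗ[k] (Fin n → k),
          (V₁.map (ExteriorAlgebra.map
              (g : (Fin n → k) →ₗ[k] (Fin n → k))).toLinearMap) ⊓ V₂ = ⊥ ∧
          (V₁.map (ExteriorAlgebra.map
              (g : (Fin n → k) →ₗ[k] (Fin n → k))).toLinearMap) ⊔ V₂ =
            ⋀[k]^2 (Fin n → k)) := by
  have hn0 : 0 < n := by omega
  have hn1 : 1 < n := by omega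
  set i0 : Fin n := ⟨0, hn0⟩ with hi0def
  set i1 : Fin n := ⟨1, hn1⟩ with hi1def
  set e : Fin n → (Fin n → k) := fun i => Pi.single i 1 with hedef
  have hW' : W = Submodule.span k {x | ∃ v : Fin n → k,
      x = ExteriorAlgebra.ι k (e i0) * ExteriorAlgebra.ι k v} := hWdef
  -- coordinate functionals
  set L : Fin n → Fin n → (ExteriorAlgebra k (Fin n → k) →ₗ[k] k) :=
    fun a b => wedgeCoord (LinearMap.proj a) (LinearMap.proj b) with hLdef
  have hL : ∀ (a b : Fin n) (x y : Fin n → k),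
      L a b (ExteriorAlgebra.ι k x * ExteriorAlgebra.ι k y) = x a * y b - y a * x b := by
    intro a b x y
    rw [hLdef, wedgeCoord_apply]
    simp [LinearMap.proj_apply]
  have hi10 : i1 ≠ i0 := by simp [hi0def, hi1def, Fin.ext_iff]
  -- action of the induced algebra map on generators
  have hmapgen : ∀ (g : (Fin n → k) ≃ₗ[k] (Fin n → k)) (v : Fin n → k),
      (ExteriorAlgebra.map (g : (Fin n → k) →ₗ[k] (Fin n → k))).toLinearMap
          (ExteriorAlgebra.ι k (e i0) * ExteriorAlgebra.ι k v)
        = ExteriorAlgebra.ι k (g (e i0)) * ExteriorAlgebra.ι k (g v) := by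
    intro g v
    simp [AlgHom.toLinearMap_apply, map_mul, ExteriorAlgebra.map_apply_ι]
  have hgen_mem : ∀ v : Fin n → k,
      ExteriorAlgebra.ι k (e i0) * ExteriorAlgebra.ι k v ∈ W := by
    intro v
    rw [hW']
    exact Submodule.subset_span ⟨v, rfl⟩
  have part1 : ∀ g : (Fin n → k) ≃ₗ[k] (Fin n → k),
      W ⊓ W.map (ExteriorAlgebra.map
        (g : (Fin n → k) →ₗ[k] (Fin n → k))).toLinearMap ≠ ⊥ := by
    intro g
    rw [Submodule.ne_bot_iff]
    by_cases hcase : ∀ j : Fin n, j ≠ i0 → g (e i0) j = 0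
    · -- g (e i0) is a multiple of e i0
      set c : k := g (e i0) i0 with hcdef
      have hc : c ≠ 0 := by
        intro h
        have hu0 : g (e i0) = 0 := by
          funext j
          by_cases hj : j = i0
          · rw [hj, ← hcdef, h]; rfl
          · rw [hcase j hj]; rfl
        have he00 : e i0 = 0 := g.injective (by rw [hu0, map_zero])
        have := congrFun he00 i0
        rw [hedef] at this
        simp [Pi.single_eq_same] at this
      have hue : g (e i0) = c • e i0 := by
        funext j
        by_cases hj : j = i0
        · subst hj
          simp [hedef, Pi.single_eq_same, hcdef]
        · rw [hcase j hj]
          simp [hedef, Pi.single_eq_of_ne hj]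
      refine ⟨ExteriorAlgebra.ι k (e i0) * ExteriorAlgebra.ι k (e i1),
        Submodule.mem_inf.2 ⟨hgen_mem (e i1), ?_⟩, ?_⟩
      · refine Submodule.mem_map.2
          ⟨ExteriorAlgebra.ι k (e i0) * ExteriorAlgebra.ι k (g.symm (c⁻¹ • e i1)),
            hgen_mem _, ?_⟩
        rw [hmapgen, g.apply_symm_apply, hue, map_smul, map_smul, smul_mul_assoc,
          mul_smul_comm, smul_smul, mul_inv_cancel₀ hc, one_smul]
      · intro h0
        have h1 := hL i0 i1 (e i0) (e i1)
        rw [h0, map_zero] at h1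
        rw [hedef] at h1
        simp [Pi.single_eq_same, Pi.single_eq_of_ne hi10, Pi.single_eq_of_ne (Ne.symm hi10)] at h1
    · push_neg at hcase
      obtain ⟨j, hj0, hj⟩ := hcase
      refine ⟨ExteriorAlgebra.ι k (e i0) * ExteriorAlgebra.ι k (g (e i0)),
        Submodule.mem_inf.2 ⟨hgen_mem _, ?_⟩, ?_⟩
      · have hswap : ExteriorAlgebra.ι k (e i0) * ExteriorAlgebra.ι k (g (e i0))
            = -(ExteriorAlgebra.ι k (g (e i0)) * ExteriorAlgebra.ι k (e i0)) :=
          eq_neg_of_add_eq_zero_left (ExteriorAlgebra.ι_add_mul_swap _ _)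
        rw [hswap]
        refine Submodule.neg_mem _ (Submodule.mem_map.2
          ⟨ExteriorAlgebra.ι k (e i0) * ExteriorAlgebra.ι k (g.symm (e i0)),
            hgen_mem _, ?_⟩)
        rw [hmapgen, g.apply_symm_apply]
      · intro h0
        have h1 := hL i0 j (e i0) (g (e i0))
        rw [h0, map_zero] at h1
        rw [hedef] at h1
        simp [Pi.single_eq_same, Pi.single_eq_of_ne hj0] at h1
        exact hj h1.symm
  have he0ne : e i0 ≠ 0 := by
    intro h
    have := congrFun h i0
    rw [hedef] at this
    simp [Pi.single_eq_same] at this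
  have hWle : W ≤ ⋀[k]^2 (Fin n → k) := by
    rw [hW', Submodule.span_le]
    rintro x ⟨v, rfl⟩
    rw [ι_mul_ι_eq_ιMulti]
    exact ExteriorAlgebra.ιMulti_range k 2 (Set.mem_range_self _)
  obtain ⟨T, hTapp⟩ : ∃ T : (Fin n → k) →ₗ[k] ExteriorAlgebra k (Fin n → k),
      ∀ v : Fin n → k, T v = ExteriorAlgebra.ι k (e i0) * ExteriorAlgebra.ι k v :=
    ⟨(LinearMap.mulLeft k (ExteriorAlgebra.ι k (e i0))).comp (ExteriorAlgebra.ι k),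
      fun v => rfl⟩
  have hWrange : W = LinearMap.range T := by
    rw [hW']
    refine le_antisymm ?_ ?_
    · rw [Submodule.span_le]
      rintro x ⟨v, rfl⟩
      exact LinearMap.mem_range.2 ⟨v, hTapp v⟩
    · rintro x hx
      obtain ⟨v, rfl⟩ := LinearMap.mem_range.1 hx
      exact Submodule.subset_span ⟨v, hTapp v⟩
  have hker : LinearMap.ker T = k ∙ (e i0) := by
    refine le_antisymm ?_ ?_
    · intro v hv
      rw [LinearMap.mem_ker] at hv
      rw [Submodule.mem_span_singleton]
      refine ⟨v i0, ?_⟩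
      funext j
      by_cases hj : j = i0
      · subst hj
        simp [hedef, Pi.single_eq_same]
      · have h1 := hL i0 j (e i0) v
        rw [← hTapp, hv, map_zero] at h1
        rw [hedef] at h1
        simp only [Pi.single_eq_same, Pi.single_eq_of_ne hj, one_mul, mul_zero,
          sub_zero] at h1
        rw [hedef]
        simp [Pi.single_eq_of_ne hj, ← h1]
    · rw [Submodule.span_le, Set.singleton_subset_iff]
      refine LinearMap.mem_ker.2 ?_
      rw [hTapp]
      exact ExteriorAlgebra.ι_sq_zero _
  have hWrank : finrank k W = n - 1 := by
    have h1 := LinearMap.finrank_range_add_finrank_ker T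
    rw [hker, finrank_span_singleton he0ne, Module.finrank_fin_fun] at h1
    rw [hWrange]
    omega
  have hfg : FiniteDimensional k
      (⋀[k]^2 (Fin n → k) : Submodule k (ExteriorAlgebra k (Fin n → k))) := by
    rw [← Submodule.fg_iff_finiteDimensional]
    have hr : (LinearMap.range (ExteriorAlgebra.ι k (M := Fin n → k))).FG := by
      rw [LinearMap.range_eq_map]
      exact Submodule.FG.map _ (Module.finite_def.mp inferInstance)
    show (LinearMap.range (ExteriorAlgebra.ι k (M := Fin n → k)) ^ 2).FG
    rw [pow_two]
    exact hr.mul hr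
  classical
  set S := {p : Fin n × Fin n // p.1 < p.2} with hSdef
  set f : S → ExteriorAlgebra k (Fin n → k) :=
    fun p => ExteriorAlgebra.ι k (e p.1.1) * ExteriorAlgebra.ι k (e p.1.2) with hfdef
  have hbase : LinearIndependent k (fun p : S => Pi.single p (1 : k)) := by
    rw [Fintype.linearIndependent_iff]
    intro g hg p
    have hp := congrFun hg p
    simp [Pi.single_apply] at hp
    rw [Finset.sum_eq_single p (by intro b _ hb; simp [Ne.symm hb]) (by simp)] at hp
    simpa using hp
  have hind : LinearIndependent k f := by
    apply LinearIndependent.of_comp (LinearMap.pi fun q : S => L q.1.1 q.1.2)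
    have heq : (⇑(LinearMap.pi fun q : S => L q.1.1 q.1.2)) ∘ f
        = fun p : S => Pi.single p (1 : k) := by
      funext p
      funext q
      simp only [Function.comp_apply, LinearMap.pi_apply, hfdef]
      rw [hL]
      simp only [hedef]
      rcases eq_or_ne q p with rfl | hqp
      · have hab : q.1.1 ≠ q.1.2 := ne_of_lt q.2
        rw [Pi.single_eq_same, Pi.single_eq_same, Pi.single_eq_same,
          Pi.single_eq_of_ne hab, Pi.single_eq_of_ne (Ne.symm hab)]
        ring
      · rw [Pi.single_eq_of_ne hqp]
        have hsec : (Pi.single (p.1.2) 1 : Fin n → k) q.1.1 * (Pi.single (p.1.1) 1 : Fin n → k) q.1.2 = 0 := by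
          by_cases hbc : q.1.1 = p.1.2
          · by_cases had : q.1.2 = p.1.1
            · exfalso
              have h2 := q.2
              rw [hbc, had] at h2
              exact absurd p.2 (lt_asymm h2)
            · rw [Pi.single_eq_of_ne had, mul_zero]
          · rw [Pi.single_eq_of_ne hbc, zero_mul]
        rw [hsec, sub_zero]
        by_cases hac : q.1.1 = p.1.1
        · have hbd : q.1.2 ≠ p.1.2 := by
            intro h
            exact hqp (Subtype.ext (Prod.ext hac h))
          rw [Pi.single_eq_of_ne hbd, mul_zero]
        · rw [Pi.single_eq_of_ne hac, zero_mul]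
    rw [heq]
    exact hbase
  have hmemS : ∀ p : S, f p ∈ ⋀[k]^2 (Fin n → k) := by
    intro p
    simp only [hfdef]
    rw [ι_mul_ι_eq_ιMulti]
    exact ExteriorAlgebra.ιMulti_range k 2 (Set.mem_range_self _)
  have hind' : LinearIndependent k
      (fun p : S => (⟨f p, hmemS p⟩ : (⋀[k]^2 (Fin n → k) : Submodule k _))) := by
    apply LinearIndependent.of_comp (⋀[k]^2 (Fin n → k) : Submodule k _).subtype
    exact hind
  have hcard := hind'.fintype_card_le_finrank
  have hScard : Fintype.card S * 2 = n * (n - 1) := by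
    have eqv : S ≃ (Σ j : Fin n, Fin j.val) :=
      { toFun := fun p => ⟨p.1.2, ⟨p.1.1.val, p.2⟩⟩
        invFun := fun x => ⟨(⟨x.2.val, lt_trans x.2.isLt x.1.isLt⟩, x.1), x.2.isLt⟩
        left_inv := fun p => rfl
        right_inv := fun x => rfl }
    rw [Fintype.card_congr eqv, Fintype.card_sigma]
    simp only [Fintype.card_fin]
    rw [Fin.sum_univ_eq_sum_range (fun j => j) n, Finset.sum_range_id_mul_two]
  have hbig : 2 * (n - 1) ≤ finrank k (⋀[k]^2 (Fin n → k) : Submodule k _) := by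
    have h4 : 4 * (n - 1) ≤ n * (n - 1) := Nat.mul_le_mul_right _ hn
    omega
  have hA : finrank k (W.comap (⋀[k]^2 (Fin n → k) : Submodule k
      (ExteriorAlgebra k (Fin n → k))).subtype) = n - 1 := by
    rw [← hWrank]
    exact LinearEquiv.finrank_eq (Submodule.comapSubtypeEquivOfLe hWle)
  obtain ⟨U, hAU, hU⟩ := exists_superset_finrank
    (W.comap (⋀[k]^2 (Fin n → k) : Submodule k (ExteriorAlgebra k (Fin n → k))).subtype)
    (finrank k (⋀[k]^2 (Fin n → k) : Submodule k (ExteriorAlgebra k (Fin n → k))) - (n - 1))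
    (by rw [hA]; omega) (Nat.sub_le _ _)
  have hV2rank : finrank k (U.map (⋀[k]^2 (Fin n → k) : Submodule k
        (ExteriorAlgebra k (Fin n → k))).subtype)
      = finrank k (⋀[k]^2 (Fin n → k) : Submodule k
        (ExteriorAlgebra k (Fin n → k))) - (n - 1) := by
    rw [Submodule.finrank_map_subtype_eq]
    exact hU
  have hWV2 : W ≤ U.map (⋀[k]^2 (Fin n → k) : Submodule k
      (ExteriorAlgebra k (Fin n → k))).subtype := by
    have h1 : W = (W.comap (⋀[k]^2 (Fin n → k) : Submodule k
        (ExteriorAlgebra k (Fin n → k))).subtype).map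
        (⋀[k]^2 (Fin n → k) : Submodule k (ExteriorAlgebra k (Fin n → k))).subtype := by
      rw [Submodule.map_comap_subtype]
      exact (inf_eq_right.2 hWle).symm
    rw [h1]
    exact Submodule.map_mono hAU
  have hV2le : U.map (⋀[k]^2 (Fin n → k) : Submodule k
      (ExteriorAlgebra k (Fin n → k))).subtype ≤ ⋀[k]^2 (Fin n → k) :=
    Submodule.map_subtype_le _ _
  refine ⟨part1, fun h => ?_⟩
  obtain ⟨g, hbot, -⟩ := h W _ hWle hV2le hWrank hV2rank
  refine part1 g (le_bot_iff.mp ?_)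
  intro x hx
  rw [Submodule.mem_inf] at hx
  rw [← hbot]
  exact Submodule.mem_inf.2 ⟨hx.2, hWV2 hx.1⟩
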